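/- Let A, B be self-adjoint operators with common domain, λ, κ ∈ ℝ, u a unit vector in the common domain, and suppose ‖e^{-itA}u - e^{-i(λ+κ)t}u‖ ≤ a·t and ‖e^{-itB}u - e^{-iλt}u‖ ≤ b·t for some a, b ≥ 0. Then the operator norm of e^{-itA} - e^{-itB} is at least 2|sin(κt/2)| - (a+b)·t for every t ≥ 0. -/

import Mathlib

open NormedSpace

lemma exp_I_sub_one_abs (θ : ℝ) :
    ‖Complex.exp (θ * Complex.I) - 1‖ = 2 * |Real.sin (θ / 2)| := by
  have h : Complex.exp ((θ : ℂ) * Complex.I) - 1 =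
      Complex.exp ((θ / 2 : ℝ) * Complex.I) *
        (2 * Complex.I * Complex.sin ((θ / 2 : ℝ) : ℂ)) := by
    have h2 : (2 : ℂ) * Complex.I * Complex.sin ((θ / 2 : ℝ) : ℂ) =
        Complex.exp (((θ / 2 : ℝ) : ℂ) * Complex.I) -
          Complex.exp (-((θ / 2 : ℝ) : ℂ) * Complex.I) := by
      rw [Complex.sin]
      field_simp
      ring_nf
      rw [Complex.I_sq]
      ring
    rw [h2, mul_sub, ← Complex.exp_add, ← Complex.exp_add]
    push_cast
    rw [show (θ:ℂ)/2 * Complex.I + θ/2 * Complex.I = θ * Complex.I by ring,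
        show (θ:ℂ)/2 * Complex.I + -(θ/2) * Complex.I = 0 by ring, Complex.exp_zero]
  rw [h, norm_mul]
  rw [show ‖Complex.exp ((θ / 2 : ℝ) * Complex.I)‖ = 1 from
    Complex.norm_exp_ofReal_mul_I _]
  rw [← Complex.ofReal_sin, norm_mul, norm_mul]
  simp [Complex.norm_real]
  rw [show ((θ:ℂ)/2) = ((θ/2 : ℝ):ℂ) by push_cast; ring, ← Complex.ofReal_sin,
    Complex.norm_real, Real.norm_eq_abs]

/-- If the evolution under `A` is `a·t`-close to the phase `e^{-i(λ+κ)t}` on a unit vector `u`, and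
the evolution under `B` is `b·t`-close to the phase `e^{-iλt}` on `u`, then
`‖e^{-itA} - e^{-itB}‖ ≥ 2|sin(κt/2)| - (a+b)t` for all `t ≥ 0`. -/
theorem stmt4 {E : Type*} [NormedAddCommGroup E] [InnerProductSpace ℂ E] [CompleteSpace E]
    (A B : E →L[ℂ] E) (hA : IsSelfAdjoint A) (hB : IsSelfAdjoint B)
    (u : E) (hu : ‖u‖ = 1) (lam κ a b : ℝ) (ha : 0 ≤ a) (hb : 0 ≤ b)
    (hAu : ∀ t : ℝ, 0 ≤ t →
      ‖exp ((-(Complex.I * t)) • A) u - Complex.exp (-(Complex.I * (lam + κ) * t)) • u‖ ≤ a * t)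
    (hBu : ∀ t : ℝ, 0 ≤ t →
      ‖exp ((-(Complex.I * t)) • B) u - Complex.exp (-(Complex.I * lam * t)) • u‖ ≤ b * t) :
    ∀ t : ℝ, 0 ≤ t →
      2 * |Real.sin (κ * t / 2)| - (a + b) * t
        ≤ ‖exp ((-(Complex.I * t)) • A) - exp ((-(Complex.I * t)) • B)‖ := by
  intro t ht
  set S := exp ((-(Complex.I * t)) • A) with hS
  set T := exp ((-(Complex.I * t)) • B) with hT
  set c₁ : ℂ := Complex.exp (-(Complex.I * (lam + κ) * t)) with hc1
  set c₂ : ℂ := Complex.exp (-(Complex.I * lam * t)) with hc2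
  have hST : ‖(S - T) u‖ ≤ ‖S - T‖ := by
    simpa [hu] using (S - T).le_opNorm u
  have hdec : (c₁ - c₂) • u = (S - T) u - (S u - c₁ • u) + (T u - c₂ • u) := by
    simp only [ContinuousLinearMap.sub_apply, sub_smul]
    abel
  have hphase : ‖(c₁ - c₂) • u‖ = 2 * |Real.sin (κ * t / 2)| := by
    rw [norm_smul, hu, mul_one]
    have : c₁ - c₂ = c₂ * (Complex.exp ((-(κ * t) : ℝ) * Complex.I) - 1) := by
      rw [mul_sub, mul_one, ← Complex.exp_add, hc1, hc2]
      push_cast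
      ring_nf
    rw [this]
    rw [norm_mul]
    rw [exp_I_sub_one_abs]
    have : ‖c₂‖ = 1 := by
      rw [hc2, Complex.norm_exp]
      simp
    rw [this, one_mul]
    rw [show -(κ * t) / 2 = -(κ * t / 2) by ring, Real.sin_neg, abs_neg]
  have hbound : ‖(c₁ - c₂) • u‖ ≤ ‖(S - T) u‖ + a * t + b * t := by
    rw [hdec]
    calc ‖(S - T) u - (S u - c₁ • u) + (T u - c₂ • u)‖
        ≤ ‖(S - T) u - (S u - c₁ • u)‖ + ‖T u - c₂ • u‖ := norm_add_le _ _
      _ ≤ ‖(S - T) u‖ + ‖S u - c₁ • u‖ + ‖T u - c₂ • u‖ := by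
          gcongr; exact norm_sub_le _ _
      _ ≤ ‖(S - T) u‖ + a * t + b * t := by
          gcongr
          · exact hAu t ht
          · exact hBu t ht
  rw [hphase] at hbound
  linarith [hST]
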